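/- Let g, h be formal power series over ℚ with the constant term of g nonzero, and let f₁ denote the constant term of h (so that f = X·h is a power series of order ≥ 1 with linear coefficient f₁, and h = f/X). Then in the ring (ℚ⟦X⟧)⟦Y⟧ one has the identity (1 + f₁·Y)⁻¹ · g · (1 - Y·(1 + f₁·Y)⁻¹·h)⁻¹ = g · (1 - Y·(h - f₁))⁻¹. Consequently, applying the transposed inverse binomial matrix B_{f₁}⁻¹ on the right of the rectified array (g, f/x) produces the Riordan array (g, (f - f₁X)/X), whose bivariate generating function is g(x)/(1 - y·(f(x) - f₁x)/x). -/

import Mathlib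

/-- For `g, h : ℚ⟦X⟧` with nonzero constant term of `g`, writing `f₁` for the
constant term of `h`, in `(ℚ⟦X⟧)⟦Y⟧` one has
`(1 + f₁Y)⁻¹ · g · (1 - Y·(1+f₁Y)⁻¹·h)⁻¹ = g · (1 - Y·(h - f₁))⁻¹`:
applying the transposed inverse binomial matrix `B_{f₁}⁻¹` on the right of the rectified array
`(g, f/x)` (where `f = X·h`) gives the Riordan array `(g, (f - f₁X)/X)`. -/
theorem stmt_1 (g h : PowerSeries ℚ)
    (hg : PowerSeries.constantCoeff (R := ℚ) g ≠ 0) :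
    Ring.inverse (1 + PowerSeries.C (R := PowerSeries ℚ)
        (PowerSeries.C (R := ℚ) (PowerSeries.constantCoeff (R := ℚ) h)) * PowerSeries.X)
      * PowerSeries.C (R := PowerSeries ℚ) g
      * Ring.inverse (1 - PowerSeries.X
          * Ring.inverse (1 + PowerSeries.C (R := PowerSeries ℚ)
              (PowerSeries.C (R := ℚ) (PowerSeries.constantCoeff (R := ℚ) h)) * PowerSeries.X)
          * PowerSeries.C (R := PowerSeries ℚ) h)
    = PowerSeries.C (R := PowerSeries ℚ) g
      * Ring.inverse (1 - PowerSeries.X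
          * PowerSeries.C (R := PowerSeries ℚ)
              (h - PowerSeries.C (R := ℚ) (PowerSeries.constantCoeff (R := ℚ) h))) := by
  set c : PowerSeries ℚ := PowerSeries.C (R := ℚ) (PowerSeries.constantCoeff (R := ℚ) h) with hc
  set A : PowerSeries (PowerSeries ℚ) :=
    1 + PowerSeries.C (R := PowerSeries ℚ) c * PowerSeries.X with hA
  set B : PowerSeries (PowerSeries ℚ) :=
    1 - PowerSeries.X * PowerSeries.C (R := PowerSeries ℚ) (h - c) with hB
  have hAu : IsUnit A := by
    rw [PowerSeries.isUnit_iff_constantCoeff]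
    simp [hA]
  obtain ⟨u, hu⟩ := hAu
  have hABu : A - PowerSeries.X * PowerSeries.C (R := PowerSeries ℚ) h = B := by
    rw [hA, hB, map_sub]; ring
  have key : 1 - PowerSeries.X * Ring.inverse A * PowerSeries.C (R := PowerSeries ℚ) h
      = Ring.inverse A * B := by
    rw [← hABu, mul_sub, ← hu, Ring.inverse_unit]
    rw [← hu] at hABu
    have := u.inv_mul
    push_cast at this ⊢
    rw [this]; ring
  rw [key, Ring.mul_inverse_rev, ← hu, Ring.inverse_unit, Ring.inverse_unit]
  have h1 : ((u⁻¹)⁻¹ : (PowerSeries (PowerSeries ℚ))ˣ) = u := inv_inv u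
  rw [h1]
  have := u.inv_mul
  push_cast at this ⊢
  calc (↑u⁻¹ : PowerSeries (PowerSeries ℚ)) * PowerSeries.C (R := PowerSeries ℚ) g
        * (Ring.inverse B * ↑u)
      = (↑u⁻¹ * ↑u) * (PowerSeries.C (R := PowerSeries ℚ) g * Ring.inverse B) := by ring
    _ = PowerSeries.C (R := PowerSeries ℚ) g * Ring.inverse B := by rw [this, one_mul]
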